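/- A pointer list of length 4 that is a fixed point of cde, cdr, and cds must be of the form [z, λ, μ, z] or [z, -μ, -λ, z] for some integer z with |z| strictly between μ and λ, where μ is the minimum absolute value and λ the maximum absolute value among its entries. -/
import Mathlib


/-- A finite sequence of integers (0-indexed list) is a *pointer list*:
(1) even positive length; (2) unique index of minimum absolute value;
(3) unique index of maximum absolute value; (4) each intermediate absolute
value occurs at exactly one other index; (5) for each even (0-based) index i,
x i ≤ x (i+1) and x i * x (i+1) > 0; (6) for each even (0-based) index i no
entry has absolute value strictly between |x i| and |x (i+1)|. -/
def IsPointerList (P : List ℤ) : Prop :=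
  P.length % 2 = 0 ∧ 0 < P.length ∧
  (∃! i, i < P.length ∧ ∀ j < P.length, |P.getD i 0| ≤ |P.getD j 0|) ∧
  (∃! i, i < P.length ∧ ∀ j < P.length, |P.getD j 0| ≤ |P.getD i 0|) ∧
  (∀ i < P.length, (∃ j < P.length, |P.getD j 0| < |P.getD i 0|) →
      (∃ j < P.length, |P.getD i 0| < |P.getD j 0|) →
      ∃! j, j < P.length ∧ j ≠ i ∧ |P.getD j 0| = |P.getD i 0|) ∧
  (∀ i, i % 2 = 0 → i + 1 < P.length →
      P.getD i 0 ≤ P.getD (i+1) 0 ∧ 0 < P.getD i 0 * P.getD (i+1) 0) ∧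
  (∀ i, i % 2 = 0 → i + 1 < P.length →
      ¬ ∃ j < P.length,
        (|P.getD i 0| < |P.getD j 0| ∧ |P.getD j 0| < |P.getD (i+1) 0|) ∨
        (|P.getD (i+1) 0| < |P.getD j 0| ∧ |P.getD j 0| < |P.getD i 0|))

-- Context directed excision: delete the first adjacent equal pair, if any.
open Classical in
noncomputable def cde (P : List ℤ) : List ℤ :=
  if h : ∃ i, i + 1 < P.length ∧ P.getD i 0 = P.getD (i+1) 0 then
    P.take (Nat.find h) ++ P.drop (Nat.find h + 2)
  else P

-- Context directed reversal: for the minimal i admitting j > i with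
-- x i = -(x j) (and the minimal such j), reverse and negate the segment
-- from position i+1 through j.
open Classical in
noncomputable def cdr (P : List ℤ) : List ℤ :=
  if h : ∃ i, ∃ j, i < j ∧ j < P.length ∧ P.getD i 0 = -(P.getD j 0) then
    let i := Nat.find h
    let j := Nat.find (Nat.find_spec h)
    P.take (i+1) ++ (((P.drop (i+1)).take (j - i)).reverse.map (fun z => -z)) ++
      P.drop (j+1)
  else P

-- Context directed block swap: for the lexicographically least (i, j)
-- admitting k, ℓ with i < j < k < ℓ, x i = x k, x j = x ℓ, interchange
-- the blocks x_{i+1}..x_{j-1} and x_k..x_ℓ.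
open Classical in
noncomputable def cds (P : List ℤ) : List ℤ :=
  if h : ∃ i, ∃ j, ∃ k, ∃ l, i < j ∧ j < k ∧ k < l ∧ l < P.length ∧
      P.getD i 0 = P.getD k 0 ∧ P.getD j 0 = P.getD l 0 then
    let i := Nat.find h
    let j := Nat.find (Nat.find_spec h)
    let k := Nat.find (Nat.find_spec (Nat.find_spec h))
    let l := Nat.find (Nat.find_spec (Nat.find_spec (Nat.find_spec h)))
    P.take (i+1) ++ ((P.drop k).take (l - k + 1)) ++ ((P.drop j).take (k - j)) ++
      ((P.drop (i+1)).take (j - i - 1)) ++ P.drop (l+1)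
  else P

/-- The doubling map π: each entry z is replaced by (z, z+1) if z > 0
and by (z-1, z) if z < 0. -/
def piMap (M : List ℤ) : List ℤ :=
  M.flatMap (fun z => if 0 < z then [z, z + 1] else [z - 1, z])

/-- One step of the HNS algorithm: apply cde if applicable, else cds if
applicable, else cdr. -/
noncomputable def hnsStep (P : List ℤ) : List ℤ :=
  if cde P ≠ P then cde P else if cds P ≠ P then cds P else cdr P

/-- a length-4 pointer list fixed by cde, cdr and cds equals
[z, λ, μ, z] or [z, -μ, -λ, z] for some z with μ < |z| < λ. -/
theorem lemA (P : List ℤ) (h1 : cde P = P) :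
    ∀ i, i + 1 < P.length → P.getD i 0 ≠ P.getD (i+1) 0 := by
  intro i hi heq
  have h : ∃ i, i + 1 < P.length ∧ P.getD i 0 = P.getD (i+1) 0 := ⟨i, hi, heq⟩
  have hf := (Nat.find_spec h).1
  have hlen : (cde P).length = P.length - 2 := by
    rw [cde, dif_pos h]
    simp only [List.length_append, List.length_take, List.length_drop]
    omega
  rw [h1] at hlen
  omega

open Classical in
theorem lemB (P : List ℤ) (h1 : cde P = P) (h2 : cdr P = P) :
    ∀ i j, i < j → j < P.length → P.getD i 0 ≠ -(P.getD j 0) := by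
  intro i j hij hj heq
  have h : ∃ i, ∃ j, i < j ∧ j < P.length ∧ P.getD i 0 = -(P.getD j 0) :=
    ⟨i, j, hij, hj, heq⟩
  obtain ⟨h1', h2', h3'⟩ := Nat.find_spec (Nat.find_spec h)
  set i0 := Nat.find h with hi0def
  set j0 := Nat.find (Nat.find_spec h) with hj0def
  -- h1' : i0 < j0, h2' : j0 < P.length, h3' : P.getD i0 0 = -(P.getD j0 0)
  have key : (cdr P).getD (i0+1) 0 = -(P.getD j0 0) := by
    rw [cdr, dif_pos h]
    simp only [← hi0def, ← hj0def]
    rw [List.getD_append]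
    · rw [List.getD_append_right]
      · simp only [List.length_take]
        have hlt : i0 + 1 - min (i0+1) P.length = 0 := by omega
        rw [hlt]
        have hTlen : (((P.drop (i0+1)).take (j0 - i0)).length) = j0 - i0 := by
          simp [List.length_take, List.length_drop]; omega
        rw [List.getD_eq_getElem _ _ (by simp [hTlen]; omega)]
        rw [List.getElem_map, List.getElem_reverse, List.getElem_take,
            List.getElem_drop]
        rw [List.getD_eq_getElem _ _ h2']
        have hcongr : ∀ (n m : ℕ) (hn : n < P.length) (hm : m < P.length),
            n = m → P[n] = P[m] := by
          intro n m hn hm e; subst e; rfl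
        exact congrArg Neg.neg (hcongr _ _ _ h2' (by
          simp only [List.length_take, List.length_drop]; omega))
      · simp [List.length_take]
    · simp [List.length_take, List.length_drop]
      omega
  rw [h2] at key
  have := lemA P h1 i0 (by omega)
  exact this (h3'.trans key.symm)

set_option maxHeartbeats 2000000 in
theorem stmt13 (P : List ℤ) (hP : IsPointerList P) (hlen : P.length = 4)
    (h1 : cde P = P) (h2 : cdr P = P) (h3 : cds P = P)
    (mu lam : ℤ)
    (hmu : (∃ i < P.length, |P.getD i 0| = mu) ∧
      ∀ i < P.length, mu ≤ |P.getD i 0|)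
    (hlam : (∃ i < P.length, |P.getD i 0| = lam) ∧
      ∀ i < P.length, |P.getD i 0| ≤ lam) :
    ∃ z : ℤ, mu < |z| ∧ |z| < lam ∧
      (P = [z, lam, mu, z] ∨ P = [z, -mu, -lam, z]) := by
  have hA := lemA P h1
  have hB := lemB P h1 h2
  match P, hlen with
  | [a, b, c, d], _ =>
  clear hlen h1 h2 h3
  obtain ⟨-, -, hMin, hMax, hMid, h5, h6⟩ := hP
  simp only [List.length_cons, List.length_nil] at *
  -- cde facts
  have nab : a ≠ b := by have := hA 0 (by omega); simpa using this
  have nbc : b ≠ c := by have := hA 1 (by omega); simpa using this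
  have ncd : c ≠ d := by have := hA 2 (by omega); simpa using this
  -- cdr facts
  have r01 : a ≠ -b := by have := hB 0 1 (by omega) (by omega); simpa using this
  have r02 : a ≠ -c := by have := hB 0 2 (by omega) (by omega); simpa using this
  have r03 : a ≠ -d := by have := hB 0 3 (by omega) (by omega); simpa using this
  have r12 : b ≠ -c := by have := hB 1 2 (by omega) (by omega); simpa using this
  have r13 : b ≠ -d := by have := hB 1 3 (by omega) (by omega); simpa using this
  have r23 : c ≠ -d := by have := hB 2 3 (by omega) (by omega); simpa using this
  -- condition 5
  have h5a := h5 0 rfl (by omega)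
  have h5b := h5 2 rfl (by omega)
  simp only [List.getD_cons_zero, List.getD_cons_succ] at h5a h5b
  -- min/max bounds
  have hmu0 : mu ≤ |a| := by simpa using hmu.2 0 (by omega)
  have hmu1 : mu ≤ |b| := by simpa using hmu.2 1 (by omega)
  have hmu2 : mu ≤ |c| := by simpa using hmu.2 2 (by omega)
  have hmu3 : mu ≤ |d| := by simpa using hmu.2 3 (by omega)
  have hla0 : |a| ≤ lam := by simpa using hlam.2 0 (by omega)
  have hla1 : |b| ≤ lam := by simpa using hlam.2 1 (by omega)
  have hla2 : |c| ≤ lam := by simpa using hlam.2 2 (by omega)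
  have hla3 : |d| ≤ lam := by simpa using hlam.2 3 (by omega)
  obtain ⟨i0, hi0, hv0⟩ := hmu.1
  obtain ⟨i1, hi1, hv1⟩ := hlam.1
  have hmuAt : |a| = mu ∨ |b| = mu ∨ |c| = mu ∨ |d| = mu := by
    interval_cases i0 <;>
      simp only [List.getD_cons_zero, List.getD_cons_succ] at hv0 <;> tauto
  have hlamAt : |a| = lam ∨ |b| = lam ∨ |c| = lam ∨ |d| = lam := by
    interval_cases i1 <;>
      simp only [List.getD_cons_zero, List.getD_cons_succ] at hv1 <;> tauto
  -- uniqueness of min/max indices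
  obtain ⟨im, ⟨him4, hmins⟩, humin⟩ := hMin
  obtain ⟨iM, ⟨hiM4, hmaxs⟩, humax⟩ := hMax
  have uniqMin : ∀ i, i < 4 → |[a,b,c,d].getD i 0| = mu → i = im := by
    intro i hi he
    exact humin i ⟨by omega, fun j hj => he ▸ hmu.2 j hj⟩
  have uniqMax : ∀ i, i < 4 → |[a,b,c,d].getD i 0| = lam → i = iM := by
    intro i hi he
    exact humax i ⟨by omega, fun j hj => he ▸ hlam.2 j hj⟩
  have m01 : ¬(|a| = mu ∧ |b| = mu) := by
    rintro ⟨p, q⟩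
    have e1 := uniqMin 0 (by omega) (by simpa using p)
    have e2 := uniqMin 1 (by omega) (by simpa using q)
    omega
  have m02 : ¬(|a| = mu ∧ |c| = mu) := by
    rintro ⟨p, q⟩
    have e1 := uniqMin 0 (by omega) (by simpa using p)
    have e2 := uniqMin 2 (by omega) (by simpa using q)
    omega
  have m03 : ¬(|a| = mu ∧ |d| = mu) := by
    rintro ⟨p, q⟩
    have e1 := uniqMin 0 (by omega) (by simpa using p)
    have e2 := uniqMin 3 (by omega) (by simpa using q)
    omega
  have m12 : ¬(|b| = mu ∧ |c| = mu) := by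
    rintro ⟨p, q⟩
    have e1 := uniqMin 1 (by omega) (by simpa using p)
    have e2 := uniqMin 2 (by omega) (by simpa using q)
    omega
  have m13 : ¬(|b| = mu ∧ |d| = mu) := by
    rintro ⟨p, q⟩
    have e1 := uniqMin 1 (by omega) (by simpa using p)
    have e2 := uniqMin 3 (by omega) (by simpa using q)
    omega
  have m23 : ¬(|c| = mu ∧ |d| = mu) := by
    rintro ⟨p, q⟩
    have e1 := uniqMin 2 (by omega) (by simpa using p)
    have e2 := uniqMin 3 (by omega) (by simpa using q)
    omega
  have M01 : ¬(|a| = lam ∧ |b| = lam) := by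
    rintro ⟨p, q⟩
    have e1 := uniqMax 0 (by omega) (by simpa using p)
    have e2 := uniqMax 1 (by omega) (by simpa using q)
    omega
  have M02 : ¬(|a| = lam ∧ |c| = lam) := by
    rintro ⟨p, q⟩
    have e1 := uniqMax 0 (by omega) (by simpa using p)
    have e2 := uniqMax 2 (by omega) (by simpa using q)
    omega
  have M03 : ¬(|a| = lam ∧ |d| = lam) := by
    rintro ⟨p, q⟩
    have e1 := uniqMax 0 (by omega) (by simpa using p)
    have e2 := uniqMax 3 (by omega) (by simpa using q)
    omega
  have M12 : ¬(|b| = lam ∧ |c| = lam) := by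
    rintro ⟨p, q⟩
    have e1 := uniqMax 1 (by omega) (by simpa using p)
    have e2 := uniqMax 2 (by omega) (by simpa using q)
    omega
  have M13 : ¬(|b| = lam ∧ |d| = lam) := by
    rintro ⟨p, q⟩
    have e1 := uniqMax 1 (by omega) (by simpa using p)
    have e2 := uniqMax 3 (by omega) (by simpa using q)
    omega
  have M23 : ¬(|c| = lam ∧ |d| = lam) := by
    rintro ⟨p, q⟩
    have e1 := uniqMax 2 (by omega) (by simpa using p)
    have e2 := uniqMax 3 (by omega) (by simpa using q)
    omega
  have hmulam : mu < lam := by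
    rcases lt_or_ge mu lam with hh | hh
    · exact hh
    · exfalso
      exact m01 ⟨le_antisymm (hla0.trans hh) hmu0, le_antisymm (hla1.trans hh) hmu1⟩
  clear uniqMin uniqMax humin humax hmins hmaxs
  -- middle pairing
  have hM : ∀ i, i < 4 → mu < |[a,b,c,d].getD i 0| → |[a,b,c,d].getD i 0| < lam →
      ∃ j, j < 4 ∧ j ≠ i ∧ |[a,b,c,d].getD j 0| = |[a,b,c,d].getD i 0| := by
    intro i hi hlo hhi
    obtain ⟨j, hj1, hj2, hj3⟩ := (hMid i (by omega) ⟨i0, hi0, by rw [hv0]; exact hlo⟩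
      ⟨i1, hi1, by rw [hv1]; exact hhi⟩).exists
    exact ⟨j, by omega, hj2, hj3⟩
  have hM0 : mu < |a| → |a| < lam → (|a| = |b| ∨ |a| = |c| ∨ |a| = |d|) := by
    intro p q
    obtain ⟨j, hj4, hne, he⟩ := hM 0 (by omega) (by simpa using p) (by simpa using q)
    interval_cases j
    all_goals first
      | exact absurd rfl hne
      | exact Or.inl (by simpa using he)
      | exact Or.inl (by simpa using he.symm)
      | exact Or.inr (Or.inl (by simpa using he))
      | exact Or.inr (Or.inl (by simpa using he.symm))
      | exact Or.inr (Or.inr (by simpa using he))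
      | exact Or.inr (Or.inr (by simpa using he.symm))
  have hM1 : mu < |b| → |b| < lam → (|b| = |a| ∨ |b| = |c| ∨ |b| = |d|) := by
    intro p q
    obtain ⟨j, hj4, hne, he⟩ := hM 1 (by omega) (by simpa using p) (by simpa using q)
    interval_cases j
    all_goals first
      | exact absurd rfl hne
      | exact Or.inl (by simpa using he)
      | exact Or.inl (by simpa using he.symm)
      | exact Or.inr (Or.inl (by simpa using he))
      | exact Or.inr (Or.inl (by simpa using he.symm))
      | exact Or.inr (Or.inr (by simpa using he))
      | exact Or.inr (Or.inr (by simpa using he.symm))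
  have hM2 : mu < |c| → |c| < lam → (|c| = |a| ∨ |c| = |b| ∨ |c| = |d|) := by
    intro p q
    obtain ⟨j, hj4, hne, he⟩ := hM 2 (by omega) (by simpa using p) (by simpa using q)
    interval_cases j
    all_goals first
      | exact absurd rfl hne
      | exact Or.inl (by simpa using he)
      | exact Or.inl (by simpa using he.symm)
      | exact Or.inr (Or.inl (by simpa using he))
      | exact Or.inr (Or.inl (by simpa using he.symm))
      | exact Or.inr (Or.inr (by simpa using he))
      | exact Or.inr (Or.inr (by simpa using he.symm))
  have hM3 : mu < |d| → |d| < lam → (|d| = |a| ∨ |d| = |b| ∨ |d| = |c|) := by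
    intro p q
    obtain ⟨j, hj4, hne, he⟩ := hM 3 (by omega) (by simpa using p) (by simpa using q)
    interval_cases j
    all_goals first
      | exact absurd rfl hne
      | exact Or.inl (by simpa using he)
      | exact Or.inl (by simpa using he.symm)
      | exact Or.inr (Or.inl (by simpa using he))
      | exact Or.inr (Or.inl (by simpa using he.symm))
      | exact Or.inr (Or.inr (by simpa using he))
      | exact Or.inr (Or.inr (by simpa using he.symm))
  clear hM hMid hv0 hv1 hi0 hi1
  -- condition 6 scalar facts
  have w2 : ¬((|a| < |c| ∧ |c| < |b|) ∨ (|b| < |c| ∧ |c| < |a|)) := by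
    intro hcon
    exact h6 0 rfl (by omega) ⟨2, by omega, by simpa using hcon⟩
  have w3 : ¬((|a| < |d| ∧ |d| < |b|) ∨ (|b| < |d| ∧ |d| < |a|)) := by
    intro hcon
    exact h6 0 rfl (by omega) ⟨3, by omega, by simpa using hcon⟩
  have y0 : ¬((|c| < |a| ∧ |a| < |d|) ∨ (|d| < |a| ∧ |a| < |c|)) := by
    intro hcon
    exact h6 2 rfl (by omega) ⟨0, by omega, by simpa using hcon⟩
  have y1 : ¬((|c| < |b| ∧ |b| < |d|) ∨ (|d| < |b| ∧ |b| < |c|)) := by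
    intro hcon
    exact h6 2 rfl (by omega) ⟨1, by omega, by simpa using hcon⟩
  clear h5 h6 hA hB hmu hlam
  obtain ⟨hab1, hab2⟩ := h5a
  obtain ⟨hcd1, hcd2⟩ := h5b
  refine ⟨a, ?_⟩
  simp only [List.cons.injEq, and_true, true_and]
  rcases mul_pos_iff.mp hab2 with ⟨ha, hb⟩ | ⟨ha, hb⟩ <;>
    rcases mul_pos_iff.mp hcd2 with ⟨hc, hd⟩ | ⟨hc, hd⟩
  · -- all positive
    clear hM2 hM3 w3 y0 y1 m01 m03 m12 m13 m23 M02 M03 M23 hab2 hcd2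
    simp only [abs_of_pos ha, abs_of_pos hb, abs_of_pos hc, abs_of_pos hd] at hmu0 hmu1 hmu2 hmu3 hla0 hla1 hla2 hla3 hmuAt hlamAt m02 M01 M12 M13 hM0 hM1 w2 ⊢
    have hab : a < b := lt_of_le_of_ne hab1 nab
    have hcd : c < d := lt_of_le_of_ne hcd1 ncd
    have hmuac : a = mu ∨ c = mu := by
      rcases hmuAt with h|h|h|h
      · exact Or.inl h
      · exact absurd h (by omega)
      · exact Or.inr h
      · exact absurd h (by omega)
    have hlambd : b = lam ∨ d = lam := by
      rcases hlamAt with g|g|g|g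
      · exact absurd g (by omega)
      · exact Or.inl g
      · exact absurd g (by omega)
      · exact Or.inr g
    clear hmuAt hlamAt
    rcases hmuac with h | h
    · exfalso
      rcases hlambd with g | g
      · have hc1 : a < c := by
          rcases eq_or_lt_of_le hmu2 with e | e
          · exact absurd ⟨h, e.symm⟩ m02
          · omega
        have hc2 : c < b := by
          rcases eq_or_lt_of_le hla2 with e | e
          · exact absurd ⟨g, e⟩ M12
          · omega
        exact w2 (Or.inl ⟨hc1, hc2⟩)
      · have hbl : b < lam := by
          rcases eq_or_lt_of_le hla1 with e | e
          · exact absurd ⟨e, g⟩ M13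
          · omega
        rcases hM1 (by omega) hbl with e|e|e
        · omega
        · exact nbc e
        · omega
    · rcases hlambd with g | g
      · have hma : mu < a := by
          rcases eq_or_lt_of_le hmu0 with e | e
          · exact absurd ⟨e.symm, h⟩ m02
          · omega
        have hal : a < lam := by
          rcases eq_or_lt_of_le hla0 with e | e
          · exact absurd ⟨e, g⟩ M01
          · omega
        rcases hM0 hma hal with e|e|e
        · exact absurd e nab
        · omega
        · exact ⟨hma, hal, Or.inl (by omega)⟩
      · exfalso
        have hma : mu < a := by
          rcases eq_or_lt_of_le hmu0 with e | e
          · exact absurd ⟨e.symm, h⟩ m02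
          · omega
        rcases hM0 hma (by omega) with e|e|e
        · exact nab e
        · omega
        · omega
  · -- a,b positive; c,d negative
    clear w2 w3 y0 y1 m01 m02 m03 m12 m13 m23 M01 M02 M03 M12 M13 M23 hab2 hcd2
    simp only [abs_of_pos ha, abs_of_pos hb, abs_of_neg hc, abs_of_neg hd] at hmu0 hmu1 hmu2 hmu3 hla0 hla1 hla2 hla3 hmuAt hlamAt hM0 hM1 hM2 hM3 ⊢
    exfalso
    rcases hmuAt with h|h|h|h <;> rcases hlamAt with g|g|g|g
    · clear hM0 hM1 hM2 hM3
      omega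
    · clear hM0 hM1 hM3
      rcases hM2 (by omega) (by omega) with e|e|e <;> omega
    · clear hM0 hM2 hM3
      rcases hM1 (by omega) (by omega) with e|e|e <;> omega
    · clear hM0 hM2 hM3
      rcases hM1 (by omega) (by omega) with e|e|e <;> omega
    · clear hM0 hM1 hM3
      rcases hM2 (by omega) (by omega) with e|e|e <;> omega
    · clear hM0 hM1 hM2 hM3
      omega
    · clear hM1 hM2 hM3
      rcases hM0 (by omega) (by omega) with e|e|e <;> omega
    · clear hM1 hM2 hM3
      rcases hM0 (by omega) (by omega) with e|e|e <;> omega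
    · clear hM0 hM2 hM3
      rcases hM1 (by omega) (by omega) with e|e|e <;> omega
    · clear hM1 hM2 hM3
      rcases hM0 (by omega) (by omega) with e|e|e <;> omega
    · clear hM0 hM1 hM2 hM3
      omega
    · clear hM1 hM2 hM3
      rcases hM0 (by omega) (by omega) with e|e|e <;> omega
    · clear hM0 hM2 hM3
      rcases hM1 (by omega) (by omega) with e|e|e <;> omega
    · clear hM1 hM2 hM3
      rcases hM0 (by omega) (by omega) with e|e|e <;> omega
    · clear hM1 hM2 hM3
      rcases hM0 (by omega) (by omega) with e|e|e <;> omega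
    · clear hM0 hM1 hM2 hM3
      omega
  · -- a,b negative; c,d positive
    clear w2 w3 y0 y1 m01 m02 m03 m12 m13 m23 M01 M02 M03 M12 M13 M23 hab2 hcd2
    simp only [abs_of_neg ha, abs_of_neg hb, abs_of_pos hc, abs_of_pos hd] at hmu0 hmu1 hmu2 hmu3 hla0 hla1 hla2 hla3 hmuAt hlamAt hM0 hM1 hM2 hM3 ⊢
    exfalso
    rcases hmuAt with h|h|h|h <;> rcases hlamAt with g|g|g|g
    · clear hM0 hM1 hM2 hM3
      omega
    · clear hM0 hM1 hM3
      rcases hM2 (by omega) (by omega) with e|e|e <;> omega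
    · clear hM0 hM2 hM3
      rcases hM1 (by omega) (by omega) with e|e|e <;> omega
    · clear hM0 hM2 hM3
      rcases hM1 (by omega) (by omega) with e|e|e <;> omega
    · clear hM0 hM1 hM3
      rcases hM2 (by omega) (by omega) with e|e|e <;> omega
    · clear hM0 hM1 hM2 hM3
      omega
    · clear hM1 hM2 hM3
      rcases hM0 (by omega) (by omega) with e|e|e <;> omega
    · clear hM1 hM2 hM3
      rcases hM0 (by omega) (by omega) with e|e|e <;> omega
    · clear hM0 hM2 hM3
      rcases hM1 (by omega) (by omega) with e|e|e <;> omega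
    · clear hM1 hM2 hM3
      rcases hM0 (by omega) (by omega) with e|e|e <;> omega
    · clear hM0 hM1 hM2 hM3
      omega
    · clear hM1 hM2 hM3
      rcases hM0 (by omega) (by omega) with e|e|e <;> omega
    · clear hM0 hM2 hM3
      rcases hM1 (by omega) (by omega) with e|e|e <;> omega
    · clear hM1 hM2 hM3
      rcases hM0 (by omega) (by omega) with e|e|e <;> omega
    · clear hM1 hM2 hM3
      rcases hM0 (by omega) (by omega) with e|e|e <;> omega
    · clear hM0 hM1 hM2 hM3
      omega
  · -- all negative
    clear hM3 w2 w3 y0 y1 m02 m03 m23 M03 M13 M23 hab2 hcd2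
    simp only [abs_of_neg ha, abs_of_neg hb, abs_of_neg hc, abs_of_neg hd] at hmu0 hmu1 hmu2 hmu3 hla0 hla1 hla2 hla3 hmuAt hlamAt m01 m12 m13 M01 M02 M12 hM0 hM1 hM2 ⊢
    have hab : a < b := lt_of_le_of_ne hab1 nab
    have hcd : c < d := lt_of_le_of_ne hcd1 ncd
    have hmubd : -b = mu ∨ -d = mu := by
      rcases hmuAt with h|h|h|h
      · exact absurd h (by omega)
      · exact Or.inl h
      · exact absurd h (by omega)
      · exact Or.inr h
    have hlamac : -a = lam ∨ -c = lam := by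
      rcases hlamAt with g|g|g|g
      · exact Or.inl g
      · exact absurd g (by omega)
      · exact Or.inr g
      · exact absurd g (by omega)
    clear hmuAt hlamAt
    rcases hmubd with h | h
    · rcases hlamac with g | g
      · exfalso
        have hc1 : mu < -c := by
          rcases eq_or_lt_of_le hmu2 with e | e
          · exact absurd ⟨h, e.symm⟩ m12
          · omega
        have hc2 : -c < lam := by
          rcases eq_or_lt_of_le hla2 with e | e
          · exact absurd ⟨g, e⟩ M02
          · omega
        rcases hM2 hc1 hc2 with e|e|e
        · omega
        · omega
        · exact ncd (by omega)
      · have hma : mu < -a := by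
          rcases eq_or_lt_of_le hmu0 with e | e
          · exact absurd ⟨e.symm, h⟩ m01
          · omega
        have hal : -a < lam := by
          rcases eq_or_lt_of_le hla0 with e | e
          · exact absurd ⟨e, g⟩ M02
          · omega
        rcases hM0 hma hal with e|e|e
        · omega
        · omega
        · exact ⟨hma, hal, Or.inr (by omega)⟩
    · exfalso
      have hb1 : mu < -b := by
        rcases eq_or_lt_of_le hmu1 with e | e
        · exact absurd ⟨e.symm, h⟩ m13
        · omega
      rcases hlamac with g | g
      · have hb2 : -b < lam := by
          rcases eq_or_lt_of_le hla1 with e | e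
          · exact absurd ⟨g, e⟩ M01
          · omega
        rcases hM1 hb1 hb2 with e|e|e
        · exact nab (by omega)
        · exact nbc (by omega)
        · omega
      · have hb2 : -b < lam := by
          rcases eq_or_lt_of_le hla1 with e | e
          · exact absurd ⟨e, g⟩ M12
          · omega
        rcases hM1 hb1 hb2 with e|e|e
        · exact nab (by omega)
        · omega
        · omega
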